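/- For n ≥ 1, commuting variables u_1,...,u_n, v_1,...,v_n, and a formal power series f(t) = Σ f_M t^M, the permanent of the n×n matrix (f(t·u_i·v_j)) equals (1/n!) Σ_{m ∈ Z_{≥0}^n} t^{|m|} (∏_i f_{m_i}) · perm(u_j^{m_i})_{i,j} · perm(v_j^{m_i})_{i,j}. -/

import Mathlib

open scoped Classical

/-- Permanent identity (bosonic): for a power series `f(t) = ∑ f_M t^M` over a
commutative ℚ-algebra and vectors `u, v`,
`perm f[t u vᵀ] = (1/n!) ∑_{m ∈ ℤ_{≥0}^n} t^{|m|} (∏_i f_{m_i}) perm(u_j^{m_i}) perm(v_j^{m_i})`,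
stated coefficient-wise in `t`; the permanent is the Leibniz sum without signs. -/
theorem stmt1 (R : Type*) [CommRing R] [Algebra ℚ R] (n : ℕ) (hn : 1 ≤ n)
    (u v : Fin n → R) (fc : ℕ → R) (k : ℕ) :
    (PowerSeries.coeff (R := R) k)
      (∑ σ : Equiv.Perm (Fin n), ∏ i : Fin n,
        PowerSeries.mk fun M => fc M * (u i * v (σ i)) ^ M) =
    ((n.factorial : ℚ)⁻¹) •
      ∑ m : Fin n → Fin (k + 1),
        if (∑ i, (m i : ℕ)) = k then
          (∏ i : Fin n, fc (m i)) *
          (∑ σ : Equiv.Perm (Fin n), ∏ i : Fin n, u (σ i) ^ (m i : ℕ)) *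
          (∑ σ : Equiv.Perm (Fin n), ∏ i : Fin n, v (σ i) ^ (m i : ℕ))
        else 0 := by
  classical
  set S : Finset (Fin n → Fin (k + 1)) :=
    Finset.univ.filter (fun m : Fin n → Fin (k + 1) => (∑ i, (m i : ℕ)) = k) with hS
  -- Step A : compute the coefficient of the product of power series
  open Fin.NatCast in
  have hA : (PowerSeries.coeff (R := R) k)
      (∑ σ : Equiv.Perm (Fin n), ∏ i : Fin n,
        PowerSeries.mk fun M => fc M * (u i * v (σ i)) ^ M)
      = ∑ σ : Equiv.Perm (Fin n), ∑ m ∈ S,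
          ∏ i, fc (m i : ℕ) * u i ^ (m i : ℕ) * v (σ i) ^ (m i : ℕ) := by
    rw [map_sum]
    refine Finset.sum_congr rfl fun σ _ => ?_
    rw [PowerSeries.coeff_prod]
    refine Finset.sum_nbij' (fun l => fun i => ((l i : ℕ) : Fin (k + 1)))
      (fun m => Finsupp.equivFunOnFinite.symm fun i => (m i : ℕ)) ?_ ?_ ?_ ?_ ?_
    · intro l hl
      rw [Finset.mem_finsuppAntidiag] at hl
      have hle : ∀ i, l i ≤ k := fun i =>
        (Finset.single_le_sum (f := fun i => l i) (fun _ _ => Nat.zero_le _)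
          (Finset.mem_univ i)).trans hl.1.le
      simp only [hS, Finset.mem_filter, Finset.mem_univ, true_and]
      have hv : ∀ i, (((l i : ℕ) : Fin (k + 1)) : ℕ) = l i := fun i => by
        simp [Nat.mod_eq_of_lt (Nat.lt_succ_of_le (hle i))]
      rw [Finset.sum_congr rfl fun i _ => hv i]
      exact hl.1
    · intro m hm
      rw [Finset.mem_finsuppAntidiag]
      refine ⟨?_, Finset.subset_univ _⟩
      simp only [hS, Finset.mem_filter, Finset.mem_univ, true_and] at hm
      simpa using hm
    · intro l hl
      rw [Finset.mem_finsuppAntidiag] at hl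
      have hle : ∀ i, l i ≤ k := fun i =>
        (Finset.single_le_sum (f := fun i => l i) (fun _ _ => Nat.zero_le _)
          (Finset.mem_univ i)).trans hl.1.le
      ext i
      simp [Nat.mod_eq_of_lt (Nat.lt_succ_of_le (hle i))]
    · intro m hm
      funext i
      simp [Fin.cast_val_eq_self]
    · intro l hl
      rw [Finset.mem_finsuppAntidiag] at hl
      have hle : ∀ i, l i ≤ k := fun i =>
        (Finset.single_le_sum (f := fun i => l i) (fun _ _ => Nat.zero_le _)
          (Finset.mem_univ i)).trans hl.1.le
      refine Finset.prod_congr rfl fun i _ => ?_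
      simp [Nat.mod_eq_of_lt (Nat.lt_succ_of_le (hle i)), PowerSeries.coeff_mk, mul_pow,
        mul_assoc]
  -- key reindexing lemma
  have key : ∀ σ π : Equiv.Perm (Fin n),
      (∑ m ∈ S, ∏ i, fc (m i : ℕ) * u (σ i) ^ (m i : ℕ) * v (π (σ i)) ^ (m i : ℕ))
      = ∑ m ∈ S, ∏ i, fc (m i : ℕ) * u i ^ (m i : ℕ) * v (π i) ^ (m i : ℕ) := by
    intro σ π
    refine Finset.sum_nbij' (fun m => fun j => m (σ.symm j)) (fun m => fun j => m (σ j))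
      ?_ ?_ ?_ ?_ ?_
    · intro m hm
      simp only [hS, Finset.mem_filter, Finset.mem_univ, true_and] at hm ⊢
      exact (Equiv.sum_comp σ.symm fun i => ((m i : ℕ))).trans hm
    · intro m hm
      simp only [hS, Finset.mem_filter, Finset.mem_univ, true_and] at hm ⊢
      exact (Equiv.sum_comp σ fun i => ((m i : ℕ))).trans hm
    · intro m _; funext j; simp
    · intro m _; funext j; simp
    · intro m _
      rw [← Equiv.prod_comp σ
        (fun j => fc ((m (σ.symm j) : ℕ)) * u j ^ ((m (σ.symm j) : ℕ)) *
          v (π j) ^ ((m (σ.symm j) : ℕ)))]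
      refine Finset.prod_congr rfl fun i _ => by simp
  -- reindexing the second permanent sum
  have step : ∀ σ : Equiv.Perm (Fin n),
      (∑ m ∈ S, ∑ τ : Equiv.Perm (Fin n),
        ∏ i, fc (m i : ℕ) * u (σ i) ^ (m i : ℕ) * v (τ i) ^ (m i : ℕ))
      = ∑ π : Equiv.Perm (Fin n), ∑ m ∈ S,
          ∏ i, fc (m i : ℕ) * u i ^ (m i : ℕ) * v (π i) ^ (m i : ℕ) := by
    intro σ
    rw [Finset.sum_comm]
    rw [← Equiv.sum_comp (Equiv.mulRight σ)
      (fun τ => ∑ m ∈ S, ∏ i, fc (m i : ℕ) * u (σ i) ^ (m i : ℕ) * v (τ i) ^ (m i : ℕ))]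
    refine Finset.sum_congr rfl fun π _ => ?_
    have : ∀ m : Fin n → Fin (k + 1), ∀ i,
        fc (m i : ℕ) * u (σ i) ^ (m i : ℕ) * v ((Equiv.mulRight σ π) i) ^ (m i : ℕ)
        = fc (m i : ℕ) * u (σ i) ^ (m i : ℕ) * v (π (σ i)) ^ (m i : ℕ) := by
      intro m i
      simp [Equiv.Perm.mul_apply]
    calc (∑ m ∈ S, ∏ i, fc (m i : ℕ) * u (σ i) ^ (m i : ℕ) *
            v ((Equiv.mulRight σ π) i) ^ (m i : ℕ))
        = ∑ m ∈ S, ∏ i, fc (m i : ℕ) * u (σ i) ^ (m i : ℕ) * v (π (σ i)) ^ (m i : ℕ) := by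
          exact Finset.sum_congr rfl fun m _ => Finset.prod_congr rfl fun i _ => this m i
      _ = _ := key σ π
  -- step C : expanding the product of the two permanents
  have hC : (∑ m ∈ S, (∏ i : Fin n, fc (m i)) *
          (∑ σ : Equiv.Perm (Fin n), ∏ i : Fin n, u (σ i) ^ (m i : ℕ)) *
          (∑ σ : Equiv.Perm (Fin n), ∏ i : Fin n, v (σ i) ^ (m i : ℕ)))
      = n.factorial • ∑ σ : Equiv.Perm (Fin n), ∑ m ∈ S,
          ∏ i, fc (m i : ℕ) * u i ^ (m i : ℕ) * v (σ i) ^ (m i : ℕ) := by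
    have expand : ∀ m ∈ S, (∏ i : Fin n, fc (m i)) *
          (∑ σ : Equiv.Perm (Fin n), ∏ i : Fin n, u (σ i) ^ (m i : ℕ)) *
          (∑ σ : Equiv.Perm (Fin n), ∏ i : Fin n, v (σ i) ^ (m i : ℕ))
        = ∑ σ : Equiv.Perm (Fin n), ∑ τ : Equiv.Perm (Fin n),
            ∏ i, fc (m i : ℕ) * u (σ i) ^ (m i : ℕ) * v (τ i) ^ (m i : ℕ) := by
      intro m _
      simp only [Finset.mul_sum, Finset.sum_mul]
      rw [Finset.sum_comm]
      refine Finset.sum_congr rfl fun σ _ => Finset.sum_congr rfl fun τ _ => ?_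
      rw [← Finset.prod_mul_distrib, ← Finset.prod_mul_distrib]
    rw [Finset.sum_congr rfl expand, Finset.sum_comm,
      Finset.sum_congr rfl fun σ _ => step σ, Finset.sum_const, Finset.card_univ,
      Fintype.card_perm, Fintype.card_fin]
  --转换 RHS
  have hB : (∑ m : Fin n → Fin (k + 1),
        if (∑ i, (m i : ℕ)) = k then
          (∏ i : Fin n, fc (m i)) *
          (∑ σ : Equiv.Perm (Fin n), ∏ i : Fin n, u (σ i) ^ (m i : ℕ)) *
          (∑ σ : Equiv.Perm (Fin n), ∏ i : Fin n, v (σ i) ^ (m i : ℕ))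
        else 0)
      = ∑ m ∈ S, (∏ i : Fin n, fc (m i)) *
          (∑ σ : Equiv.Perm (Fin n), ∏ i : Fin n, u (σ i) ^ (m i : ℕ)) *
          (∑ σ : Equiv.Perm (Fin n), ∏ i : Fin n, v (σ i) ^ (m i : ℕ)) := by
    rw [hS]
    exact (Finset.sum_filter _ _).symm
  rw [hA, hB, hC, ← Nat.cast_smul_eq_nsmul ℚ, smul_smul,
    inv_mul_cancel₀ (by exact_mod_cast n.factorial_ne_zero), one_smul]
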